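/- Any two topological orderings of a finite DAG are connected by a sequence of swaps of adjacent vertices, where each swap exchanges two adjacent vertices with no edge between them and each intermediate sequence is itself a topological ordering. -/

import Mathlib

/-- `l` is a topological ordering of the directed graph `E`. -/
def IsTopoOrdering {V : Type*} (E : V → V → Prop) (l : List V) : Prop :=
  l.Nodup ∧ (∀ v : V, v ∈ l) ∧
    ∀ (i j : ℕ) (hi : i < l.length) (hj : j < l.length),
      E (l.get ⟨i, hi⟩) (l.get ⟨j, hj⟩) → i < j

/-- `l₂` is obtained from `l₁` by swapping two adjacent vertices that have
no edge between them in either direction. -/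
def AdjSwap {V : Type*} (E : V → V → Prop) (l₁ l₂ : List V) : Prop :=
  ∃ (xs ys : List V) (a b : V),
    l₁ = xs ++ a :: b :: ys ∧ l₂ = xs ++ b :: a :: ys ∧ ¬ E a b ∧ ¬ E b a

lemma topo_iff {V : Type*} (E : V → V → Prop) (hirr : ∀ v, ¬ E v v) (l : List V) :
    IsTopoOrdering E l ↔ l.Nodup ∧ (∀ v, v ∈ l) ∧ l.Pairwise (fun a b => ¬ E b a) := by
  constructor
  · rintro ⟨hn, hm, ho⟩
    refine ⟨hn, hm, ?_⟩
    rw [List.pairwise_iff_get]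
    intro i j hij hE
    exact absurd (ho j i j.isLt i.isLt hE) (by omega)
  · rintro ⟨hn, hm, hp⟩
    refine ⟨hn, hm, ?_⟩
    intro i j hi hj hE
    rcases lt_trichotomy i j with h|h|h
    · exact h
    · exfalso; subst h; exact hirr _ hE
    · exact absurd hE ((List.pairwise_iff_get.mp hp) ⟨j, hj⟩ ⟨i, hi⟩ h)

lemma pairwise_swap {V : Type*} {P : V → V → Prop} {X Y : List V} {a b : V}
    (h : List.Pairwise P (X ++ b :: a :: Y)) (hab : P a b) :
    List.Pairwise P (X ++ a :: b :: Y) := by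
  rw [List.pairwise_append, List.pairwise_cons, List.pairwise_cons] at h ⊢
  obtain ⟨h1, ⟨hb, ha, h2⟩, h3⟩ := h
  refine ⟨h1, ⟨?_, ?_, h2⟩, ?_⟩
  · intro x hx
    rcases List.mem_cons.mp hx with rfl | hx'
    · exact hab
    · exact ha x hx'
  · intro x hx; exact hb x (List.mem_cons_of_mem _ hx)
  · intro x hx y hy
    apply h3 x hx
    simp only [List.mem_cons] at hy ⊢
    tauto

lemma swap_topo {V : Type*} {E : V → V → Prop} (hirr : ∀ v, ¬ E v v)
    {X Y : List V} {a b : V}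
    (h : IsTopoOrdering E (X ++ b :: a :: Y)) (hba : ¬ E b a) :
    IsTopoOrdering E (X ++ a :: b :: Y) := by
  rw [topo_iff E hirr] at h ⊢
  obtain ⟨hn, hm, hp⟩ := h
  have hperm : (X ++ b :: a :: Y).Perm (X ++ a :: b :: Y) :=
    List.Perm.append_left X (List.Perm.swap a b Y)
  exact ⟨hperm.nodup hn, fun v => hperm.mem_iff.mp (hm v), pairwise_swap hp hba⟩

lemma bubble {V : Type*} (E : V → V → Prop) (hirr : ∀ v, ¬ E v v) (a : V) :
    ∀ (xs pre ys : List V),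
    (∀ v ∈ xs, ¬ E v a ∧ ¬ E a v) →
    IsTopoOrdering E (pre ++ xs ++ a :: ys) →
    Relation.ReflTransGen (fun m₁ m₂ => AdjSwap E m₁ m₂ ∧ IsTopoOrdering E m₂)
      (pre ++ xs ++ a :: ys) (pre ++ a :: (xs ++ ys)) ∧
    IsTopoOrdering E (pre ++ a :: (xs ++ ys)) := by
  intro xs
  induction xs with
  | nil =>
    intro pre ys _ ht
    simp only [List.append_nil, List.nil_append]
    exact ⟨Relation.ReflTransGen.refl, by simpa using ht⟩
  | cons b xs ih =>
    intro pre ys hx ht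
    have hb := hx b (List.mem_cons_self (a := b) (l := xs))
    have ht' : IsTopoOrdering E ((pre ++ [b]) ++ xs ++ a :: ys) := by
      simpa [List.append_assoc] using ht
    obtain ⟨hrtg, htopo⟩ := ih (pre ++ [b]) ys (fun v hv => hx v (List.mem_cons_of_mem _ hv)) ht'
    have htopo' : IsTopoOrdering E (pre ++ b :: a :: (xs ++ ys)) := by
      simpa [List.append_assoc] using htopo
    have hswap : IsTopoOrdering E (pre ++ a :: b :: (xs ++ ys)) :=
      swap_topo hirr htopo' hb.1
    refine ⟨?_, by simpa using hswap⟩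
    have step : Relation.ReflTransGen (fun m₁ m₂ => AdjSwap E m₁ m₂ ∧ IsTopoOrdering E m₂)
        (pre ++ b :: a :: (xs ++ ys)) (pre ++ a :: b :: (xs ++ ys)) :=
      Relation.ReflTransGen.single ⟨⟨pre, xs ++ ys, b, a, rfl, rfl, hb.1, hb.2⟩, hswap⟩
    have e1 : pre ++ (b :: xs) ++ a :: ys = (pre ++ [b]) ++ xs ++ a :: ys := by simp
    have e2 : (pre ++ [b]) ++ a :: (xs ++ ys) = pre ++ b :: a :: (xs ++ ys) := by simp
    have e3 : pre ++ a :: ((b :: xs) ++ ys) = pre ++ a :: b :: (xs ++ ys) := by simp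
    rw [e1, e3]
    exact (e2 ▸ hrtg).trans step

lemma main_aux {V : Type*} (E : V → V → Prop) (hirr : ∀ v, ¬ E v v) :
    ∀ (l₂ pre l₁ : List V), l₁.Perm l₂ →
    IsTopoOrdering E (pre ++ l₁) → IsTopoOrdering E (pre ++ l₂) →
    Relation.ReflTransGen (fun m₁ m₂ => AdjSwap E m₁ m₂ ∧ IsTopoOrdering E m₂)
      (pre ++ l₁) (pre ++ l₂) := by
  intro l₂
  induction l₂ with
  | nil => intro pre l₁ hp _ _; rw [List.perm_nil.mp hp]
  | cons a t₂ ih =>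
    intro pre l₁ hp ht₁ ht₂
    have ha : a ∈ l₁ := hp.mem_iff.mpr (List.mem_cons_self (a := a) (l := t₂))
    obtain ⟨xs, ys, rfl⟩ := List.append_of_mem ha
    have hpw₁ := ((topo_iff E hirr _).mp ht₁).2.2
    have hpw₂ := ((topo_iff E hirr _).mp ht₂).2.2
    have hnd₁ := ((topo_iff E hirr _).mp ht₁).1
    have hx : ∀ v ∈ xs, ¬ E v a ∧ ¬ E a v := by
      intro v hv
      constructor
      · have hninner : (xs ++ a :: ys).Nodup := hnd₁.of_append_right
        have hdisj := (List.nodup_append.mp hninner).2.2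
        have hvne : v ≠ a := by
          rintro rfl
          exact hdisj v hv v (List.mem_cons_self (a := v) (l := ys)) rfl
        have hvl₂ : v ∈ a :: t₂ := hp.mem_iff.mp (by simp [hv])
        have hvt₂ : v ∈ t₂ := by
          rcases List.mem_cons.mp hvl₂ with rfl | h
          · exact absurd rfl hvne
          · exact h
        have hinner₂ : List.Pairwise (fun a b => ¬ E b a) (a :: t₂) :=
          (List.pairwise_append.mp hpw₂).2.1
        exact (List.pairwise_cons.mp hinner₂).1 v hvt₂
      · have hinner₁ : List.Pairwise (fun a b => ¬ E b a) (xs ++ a :: ys) :=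
          (List.pairwise_append.mp hpw₁).2.1
        exact (List.pairwise_append.mp hinner₁).2.2 v hv a (List.mem_cons_self (a := a) (l := ys))
    have ht₁' : IsTopoOrdering E (pre ++ xs ++ a :: ys) := by
      simpa [List.append_assoc] using ht₁
    obtain ⟨hrtg, htopo⟩ := bubble E hirr a xs pre ys hx ht₁'
    have htopo' : IsTopoOrdering E ((pre ++ [a]) ++ (xs ++ ys)) := by
      simpa [List.append_assoc] using htopo
    have ht₂' : IsTopoOrdering E ((pre ++ [a]) ++ t₂) := by
      simpa [List.append_assoc] using ht₂
    have hperm : (xs ++ ys).Perm t₂ := by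
      have h1 : (xs ++ a :: ys).Perm (a :: (xs ++ ys)) := List.perm_middle.symm.symm
      exact ((h1.symm.trans hp)).cons_inv
    have hrest := ih (pre ++ [a]) (xs ++ ys) hperm htopo' ht₂'
    have e0 : pre ++ (xs ++ a :: ys) = pre ++ xs ++ a :: ys := by simp
    rw [e0]
    exact hrtg.trans (by simpa [List.append_assoc] using hrest)

/-- Any two topological orderings of a finite DAG are connected by a sequence
of swaps of adjacent non-adjacent-in-`E` vertices, each intermediate list being
itself a topological ordering. -/
theorem topo_orderings_connected_by_swaps {V : Type*} [Fintype V]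
    (E : V → V → Prop) (hacyc : ∀ v, ¬ Relation.TransGen E v v)
    (l₁ l₂ : List V) (h₁ : IsTopoOrdering E l₁) (h₂ : IsTopoOrdering E l₂) :
    Relation.ReflTransGen (fun m₁ m₂ => AdjSwap E m₁ m₂ ∧ IsTopoOrdering E m₂) l₁ l₂ := by
  classical
  have hirr : ∀ v, ¬ E v v := fun v hv => hacyc v (Relation.TransGen.single hv)
  have hperm : l₁.Perm l₂ := by
    apply List.perm_of_nodup_nodup_toFinset_eq h₁.1 h₂.1
    ext v
    simp [h₁.2.1 v, h₂.2.1 v]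
  simpa using main_aux E hirr l₂ [] l₁ hperm (by simpa using h₁) (by simpa using h₂)
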